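/- If a multiset V of n reals contains a sub-multiset of n - t values that are pairwise within ε of each other, and n > 3t, then the trimmed mean AVG(V) lies within the interval [m, m + ε], where m is the minimum of that sub-multiset; consequently any two trimmed means computed from multisets both containing this sub-multiset are within ε of each other. -/

import Mathlib

/-- `M` with its `t` smallest and `t` largest elements removed (as a sorted list). -/
noncomputable def trimmed (t : ℕ) (M : Multiset ℝ) : List ℝ :=
  ((M.sort (· ≤ ·)).drop t).take (Multiset.card M - 2 * t)

/-- The trimmed average: the mean of `M` after removing the `t` smallest and `t` largest. -/
noncomputable def tAVG (t : ℕ) (M : Multiset ℝ) : ℝ :=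
  (trimmed t M).sum / ((Multiset.card M : ℝ) - 2 * t)


lemma sorted_bound (n t : ℕ) (m ε : ℝ) (V : Multiset ℝ)
    (hV : Multiset.card V = n)
    (hlo : Multiset.countP (fun x => x < m) V ≤ t)
    (hhi : Multiset.countP (fun x => m + ε < x) V ≤ t) :
    ∀ i (h : i < (V.sort (· ≤ ·)).length), t ≤ i → i < n - t →
      m ≤ (V.sort (· ≤ ·))[i] ∧ (V.sort (· ≤ ·))[i] ≤ m + ε := by
  intro i h hti hint
  set l := V.sort (· ≤ ·) with hl
  have hsort : l.Pairwise (· ≤ ·) := V.pairwise_sort _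
  have hlen : l.length = n := by rw [hl, Multiset.length_sort, hV]
  have hcl : ∀ (p : ℝ → Prop) [DecidablePred p],
      l.countP (fun x => decide (p x)) = Multiset.countP p V := by
    intro p _
    rw [← Multiset.coe_countP, hl, Multiset.sort_eq]
  constructor
  · by_contra hc
    push_neg at hc
    have h1 : (l.take (i+1)).countP (fun x => decide (x < m)) = (l.take (i+1)).length := by
      rw [List.countP_eq_length]
      intro a ha
      obtain ⟨j, hj, rfl⟩ := List.getElem_of_mem ha
      rw [List.getElem_take]
      simp only [decide_eq_true_eq]
      have hj' : j ≤ i := by simp [List.length_take] at hj; omega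
      have hje : j < l.length := by omega
      have : l[j] ≤ l[i] := by
        have := hsort.rel_get_of_le (a := ⟨j, hje⟩) (b := ⟨i, h⟩) hj'
        simpa using this
      linarith
    have h2 := (List.take_sublist (i+1) l).countP_le (p := fun x => decide (x < m))
    rw [h1, hcl (fun x => x < m)] at h2
    have : (l.take (i+1)).length = i + 1 := by simp [List.length_take, hlen]; omega
    omega
  · by_contra hc
    push_neg at hc
    have h1 : (l.drop i).countP (fun x => decide (m + ε < x)) = (l.drop i).length := by
      rw [List.countP_eq_length]
      intro a ha
      obtain ⟨j, hj, rfl⟩ := List.getElem_of_mem ha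
      rw [List.getElem_drop]
      simp only [decide_eq_true_eq]
      have hje : i + j < l.length := by simp [List.length_drop] at hj; omega
      have : l[i] ≤ l[i+j] := by
        have := hsort.rel_get_of_le (a := ⟨i, h⟩) (b := ⟨i+j, hje⟩) (by simp)
        simpa using this
      linarith
    have h2 := (List.drop_sublist i l).countP_le (p := fun x => decide (m + ε < x))
    rw [h1, hcl (fun x => m + ε < x)] at h2
    have : (l.drop i).length = n - i := by simp [List.length_drop, hlen]
    omega

lemma count_small (S V : Multiset ℝ) (h : S ≤ V) (p : ℝ → Prop) [DecidablePred p]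
    (h0 : ∀ x ∈ S, ¬ p x) :
    Multiset.countP p V ≤ Multiset.card V - Multiset.card S := by
  have h1 : Multiset.countP p V = Multiset.countP p (V - S) + Multiset.countP p S := by
    conv_lhs => rw [← tsub_add_cancel_of_le h]
    rw [Multiset.countP_add]
  have h0' : Multiset.countP p S = 0 := Multiset.countP_eq_zero.2 h0
  have h2 := Multiset.countP_le_card p (V - S)
  rw [Multiset.card_sub h] at h2
  omega

lemma tAVG_mem (n t : ℕ) (ht : 3 * t < n) (ε : ℝ) (hε : 0 ≤ ε)
    (S V : Multiset ℝ) (hS : Multiset.card S = n - t)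
    (hV : Multiset.card V = n) (hSV : S ≤ V)
    (m : ℝ) (hS' : ∀ x ∈ S, m ≤ x ∧ x ≤ m + ε) :
    tAVG t V ∈ Set.Icc m (m + ε) := by
  have htn : t ≤ n := by omega
  have hlo : Multiset.countP (fun x => x < m) V ≤ t := by
    have := count_small S V hSV (fun x => x < m) (fun x hx => not_lt.2 (hS' x hx).1)
    rw [hS, hV] at this; omega
  have hhi : Multiset.countP (fun x => m + ε < x) V ≤ t := by
    have := count_small S V hSV (fun x => m + ε < x) (fun x hx => not_lt.2 (hS' x hx).2)
    rw [hS, hV] at this; omega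
  have hb := sorted_bound n t m ε V hV hlo hhi
  set l := V.sort (· ≤ ·) with hldef
  have hlen : l.length = n := by rw [hldef, Multiset.length_sort, hV]
  have hmem : ∀ x ∈ trimmed t V, m ≤ x ∧ x ≤ m + ε := by
    intro x hx
    unfold trimmed at hx
    obtain ⟨j, hj, rfl⟩ := List.getElem_of_mem hx
    simp only [List.length_take, List.length_drop, hlen, hV] at hj
    rw [List.getElem_take, List.getElem_drop]
    exact hb (t + j) (by omega) (by omega) (by omega)
  have hlt : (trimmed t V).length = n - 2 * t := by
    unfold trimmed
    simp [List.length_take, List.length_drop, hlen, hV]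
    omega
  have hsum1 := List.card_nsmul_le_sum (trimmed t V) m (fun x hx => (hmem x hx).1)
  have hsum2 := List.sum_le_card_nsmul (trimmed t V) (m + ε) (fun x hx => (hmem x hx).2)
  rw [hlt, nsmul_eq_mul] at hsum1 hsum2
  have hc : ((Multiset.card V : ℝ) - 2 * t) = ((n - 2 * t : ℕ) : ℝ) := by
    rw [hV]
    push_cast [Nat.cast_sub (by omega : 2 * t ≤ n)]
    ring
  have hcpos : (0:ℝ) < ((n - 2 * t : ℕ) : ℝ) := by
    have : 0 < n - 2 * t := by omega
    exact_mod_cast this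
  unfold tAVG
  rw [hc]
  constructor
  · rw [le_div_iff₀ hcpos]
    calc m * ((n - 2*t : ℕ):ℝ) = ((n - 2*t : ℕ):ℝ) * m := by ring
    _ ≤ _ := hsum1
  · rw [div_le_iff₀ hcpos]
    calc (trimmed t V).sum ≤ ((n - 2*t : ℕ):ℝ) * (m + ε) := hsum2
    _ = (m + ε) * ((n - 2*t : ℕ):ℝ) := by ring


theorem stmt_16 (n t : ℕ) (ht : 3 * t < n) (ε : ℝ) (hε : 0 ≤ ε)
    (S V V' : Multiset ℝ)
    (hS : Multiset.card S = n - t)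
    (hV : Multiset.card V = n) (hV' : Multiset.card V' = n)
    (hSV : S ≤ V) (hSV' : S ≤ V')
    (m : ℝ) (hm : m ∈ S) (hS' : ∀ x ∈ S, m ≤ x ∧ x ≤ m + ε) :
    tAVG t V ∈ Set.Icc m (m + ε) ∧ tAVG t V' ∈ Set.Icc m (m + ε) ∧
      |tAVG t V - tAVG t V'| ≤ ε := by
  have h1 := tAVG_mem n t ht ε hε S V hS hV hSV m hS'
  have h2 := tAVG_mem n t ht ε hε S V' hS hV' hSV' m hS'
  refine ⟨h1, h2, ?_⟩
  obtain ⟨a1, b1⟩ := h1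
  obtain ⟨a2, b2⟩ := h2
  rw [abs_sub_le_iff]
  constructor <;> linarith
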